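/- For all real x with 0 < x < π/2, 2 + (2/π)^4 · x^3 · tan x < (sin x / x)^2 + (tan x)/x < 2 + (8/45) · x^3 · tan x. -/

import Mathlib

open Real

private lemma mono_aux {F F' : ℝ → ℝ} (hd : ∀ y, HasDerivAt F (F' y) y)
    (h0 : F 0 = 0) (hF' : ∀ y, 0 ≤ y → 0 ≤ F' y) {x : ℝ} (hx : 0 ≤ x) : 0 ≤ F x := by
  have hmono : MonotoneOn F (Set.Ici (0:ℝ)) := by
    apply monotoneOn_of_deriv_nonneg (convex_Ici 0)
    · exact fun y _ => (hd y).continuousAt.continuousWithinAt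
    · exact fun y _ => (hd y).differentiableAt.differentiableWithinAt
    · intro y hy
      rw [interior_Ici] at hy
      rw [(hd y).deriv]
      exact hF' y (le_of_lt hy)
  have := hmono (Set.self_mem_Ici) (Set.mem_Ici.2 hx) hx
  linarith [h0 ▸ this]

private lemma sin_lb3 {x : ℝ} (hx : 0 ≤ x) : sin x ≥ x - x^3/6 := by
  have h := mono_aux (F := fun y => sin y - (y - y^3/6))
      (F' := fun y => cos y - (1 - y^2/2)) (fun y => by
        have hh := ((Real.hasDerivAt_sin y).sub ((hasDerivAt_id y).sub ((hasDerivAt_pow 3 y).div_const 6)))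
        exact hh.congr_deriv (by norm_num <;> ring))
      (by norm_num) (fun y hy => by
        have hp := Real.one_sub_sq_div_two_le_cos (x := y)
        nlinarith [hp]) hx
  linarith

private lemma cos_ub4 {x : ℝ} (hx : 0 ≤ x) : cos x ≤ 1 - x^2/2 + x^4/24 := by
  have h := mono_aux (F := fun y => (1 - y^2/2 + y^4/24) - cos y)
      (F' := fun y => (-y + y^3/6) + sin y) (fun y => by
        have hh := ((((hasDerivAt_const y (1:ℝ)).sub ((hasDerivAt_pow 2 y).div_const 2)).add ((hasDerivAt_pow 4 y).div_const 24)).sub (Real.hasDerivAt_cos y))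
        exact hh.congr_deriv (by norm_num <;> ring))
      (by norm_num) (fun y hy => by
        have hp := sin_lb3 hy
        nlinarith [hp]) hx
  linarith

private lemma sin_ub5 {x : ℝ} (hx : 0 ≤ x) : sin x ≤ x - x^3/6 + x^5/120 := by
  have h := mono_aux (F := fun y => (y - y^3/6 + y^5/120) - sin y)
      (F' := fun y => (1 - y^2/2 + y^4/24) - cos y) (fun y => by
        have hh := ((((hasDerivAt_id y).sub ((hasDerivAt_pow 3 y).div_const 6)).add ((hasDerivAt_pow 5 y).div_const 120)).sub (Real.hasDerivAt_sin y))
        exact hh.congr_deriv (by norm_num <;> ring))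
      (by norm_num) (fun y hy => by
        have hp := cos_ub4 hy
        nlinarith [hp]) hx
  linarith

private lemma cos_lb6 {x : ℝ} (hx : 0 ≤ x) : cos x ≥ 1 - x^2/2 + x^4/24 - x^6/720 := by
  have h := mono_aux (F := fun y => cos y - (1 - y^2/2 + y^4/24 - y^6/720))
      (F' := fun y => -sin y - (-y + y^3/6 - y^5/120)) (fun y => by
        have hh := ((Real.hasDerivAt_cos y).sub ((((hasDerivAt_const y (1:ℝ)).sub ((hasDerivAt_pow 2 y).div_const 2)).add ((hasDerivAt_pow 4 y).div_const 24)).sub ((hasDerivAt_pow 6 y).div_const 720)))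
        exact hh.congr_deriv (by norm_num <;> ring))
      (by norm_num) (fun y hy => by
        have hp := sin_ub5 hy
        nlinarith [hp]) hx
  linarith

private lemma sin_lb7 {x : ℝ} (hx : 0 ≤ x) : sin x ≥ x - x^3/6 + x^5/120 - x^7/5040 := by
  have h := mono_aux (F := fun y => sin y - (y - y^3/6 + y^5/120 - y^7/5040))
      (F' := fun y => cos y - (1 - y^2/2 + y^4/24 - y^6/720)) (fun y => by
        have hh := ((Real.hasDerivAt_sin y).sub ((((hasDerivAt_id y).sub ((hasDerivAt_pow 3 y).div_const 6)).add ((hasDerivAt_pow 5 y).div_const 120)).sub ((hasDerivAt_pow 7 y).div_const 5040)))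
        exact hh.congr_deriv (by norm_num <;> ring))
      (by norm_num) (fun y hy => by
        have hp := cos_lb6 hy
        nlinarith [hp]) hx
  linarith

private lemma cos_ub8 {x : ℝ} (hx : 0 ≤ x) : cos x ≤ 1 - x^2/2 + x^4/24 - x^6/720 + x^8/40320 := by
  have h := mono_aux (F := fun y => (1 - y^2/2 + y^4/24 - y^6/720 + y^8/40320) - cos y)
      (F' := fun y => (-y + y^3/6 - y^5/120 + y^7/5040) + sin y) (fun y => by
        have hh := ((((((hasDerivAt_const y (1:ℝ)).sub ((hasDerivAt_pow 2 y).div_const 2)).add ((hasDerivAt_pow 4 y).div_const 24)).sub ((hasDerivAt_pow 6 y).div_const 720)).add ((hasDerivAt_pow 8 y).div_const 40320)).sub (Real.hasDerivAt_cos y))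
        exact hh.congr_deriv (by norm_num <;> ring))
      (by norm_num) (fun y hy => by
        have hp := sin_lb7 hy
        nlinarith [hp]) hx
  linarith

private lemma sin_ub9 {x : ℝ} (hx : 0 ≤ x) : sin x ≤ x - x^3/6 + x^5/120 - x^7/5040 + x^9/362880 := by
  have h := mono_aux (F := fun y => (y - y^3/6 + y^5/120 - y^7/5040 + y^9/362880) - sin y)
      (F' := fun y => (1 - y^2/2 + y^4/24 - y^6/720 + y^8/40320) - cos y) (fun y => by
        have hh := ((((((hasDerivAt_id y).sub ((hasDerivAt_pow 3 y).div_const 6)).add ((hasDerivAt_pow 5 y).div_const 120)).sub ((hasDerivAt_pow 7 y).div_const 5040)).add ((hasDerivAt_pow 9 y).div_const 362880)).sub (Real.hasDerivAt_sin y))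
        exact hh.congr_deriv (by norm_num <;> ring))
      (by norm_num) (fun y hy => by
        have hp := cos_ub8 hy
        nlinarith [hp]) hx
  linarith
private lemma certA (x : ℝ) (hx : 0 < x) (hu : x^2 < 24674013/10000000) :
    0 < 2*x^2*(1 - x^2/2 + x^4/24 - x^6/720) + 8/45*x^5*(x - x^3/6 + x^5/120 - x^7/5040) - (x - x^3/6 + x^5/120 - x^7/5040 + x^9/362880)^2*(1 - x^2/2 + x^4/24 - x^6/720 + x^8/40320) - x*(x - x^3/6 + x^5/120 - x^7/5040 + x^9/362880) := by
  have hv : 0 < x^2 := by positivity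
  have hw : (0:ℝ) < 24674013/10000000 - x^2 := by linarith
  have key : 2*x^2*(1 - x^2/2 + x^4/24 - x^6/720) + 8/45*x^5*(x - x^3/6 + x^5/120 - x^7/5040) - (x - x^3/6 + x^5/120 - x^7/5040 + x^9/362880)^2*(1 - x^2/2 + x^4/24 - x^6/720 + x^8/40320) - x*(x - x^3/6 + x^5/120 - x^7/5040 + x^9/362880) = 
      (1600000000000000000000000000000000000000000000000000000000000000/640648637884235003677816420260922026335800088117131596994913350135497)*(x^2)^4*((24674013/10000000) - x^2)^9 + (1465835054312500000000000000000000000000000000000000000000000000/71183181987137222630868491140102447370644454235236844110545927792833)*(x^2)^5*((24674013/10000000) - x^2)^8 + (5357590538800224012500000000000000000000000000000000000000000000/71183181987137222630868491140102447370644454235236844110545927792833)*(x^2)^6*((24674013/10000000) - x^2)^7 + (4880913877951965043577893046875000000000000000000000000000000000/30507077994487381127515067631472477444561908957958647475948254768357)*(x^2)^7*((24674013/10000000) - x^2)^6 + (2215791559404167700937088576582892968750000000000000000000000000/10169025998162460375838355877157492481520636319319549158649418256119)*(x^2)^8*((24674013/10000000) - x^2)^5 + (2003986860752667714022277068688449709545395507812500000000000000/10169025998162460375838355877157492481520636319319549158649418256119)*(x^2)^9*((24674013/10000000)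 - x^2)^4 + (3608556881111182247069351865371099900297154326052490234375000000/30507077994487381127515067631472477444561908957958647475948254768357)*(x^2)^10*((24674013/10000000) - x^2)^3 + (25855145552009114780058886055217688330547254953144306349560546875/569465455897097781046947929120819578965155633881894752884367422342664)*(x^2)^11*((24674013/10000000) - x^2)^2 + (1472832916409344702800974157823637649153173639314891194681874421875/145783156709657031948018669854929812215079842273765056738398060119721984)*(x^2)^12*((24674013/10000000) - x^2)^1 + (166558426159163046596019813414280193342650339465634703317560742699366329/167942196529524900804117507672879143671771978299377345362634565257919725568000)*(x^2)^13 := by ring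
  have h0 : 0 < (1600000000000000000000000000000000000000000000000000000000000000/640648637884235003677816420260922026335800088117131596994913350135497)*(x^2)^4*((24674013/10000000) - x^2)^9 := mul_pos (mul_pos (by norm_num : (0:ℝ) < (1600000000000000000000000000000000000000000000000000000000000000/640648637884235003677816420260922026335800088117131596994913350135497)) (pow_pos hv 4)) (pow_pos hw 9)
  have h1 : 0 ≤ (1465835054312500000000000000000000000000000000000000000000000000/71183181987137222630868491140102447370644454235236844110545927792833)*(x^2)^5*((24674013/10000000) - x^2)^8 := mul_nonneg (mul_nonneg (by norm_num : (0:ℝ) ≤ (1465835054312500000000000000000000000000000000000000000000000000/71183181987137222630868491140102447370644454235236844110545927792833)) (pow_nonneg hv.le 5)) (pow_nonneg hw.le 8)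
  have h2 : 0 ≤ (5357590538800224012500000000000000000000000000000000000000000000/71183181987137222630868491140102447370644454235236844110545927792833)*(x^2)^6*((24674013/10000000) - x^2)^7 := mul_nonneg (mul_nonneg (by norm_num : (0:ℝ) ≤ (5357590538800224012500000000000000000000000000000000000000000000/71183181987137222630868491140102447370644454235236844110545927792833)) (pow_nonneg hv.le 6)) (pow_nonneg hw.le 7)
  have h3 : 0 ≤ (4880913877951965043577893046875000000000000000000000000000000000/30507077994487381127515067631472477444561908957958647475948254768357)*(x^2)^7*((24674013/10000000) - x^2)^6 := mul_nonneg (mul_nonneg (by norm_num : (0:ℝ) ≤ (4880913877951965043577893046875000000000000000000000000000000000/30507077994487381127515067631472477444561908957958647475948254768357)) (pow_nonneg hv.le 7)) (pow_nonneg hw.le 6)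
  have h4 : 0 ≤ (2215791559404167700937088576582892968750000000000000000000000000/10169025998162460375838355877157492481520636319319549158649418256119)*(x^2)^8*((24674013/10000000) - x^2)^5 := mul_nonneg (mul_nonneg (by norm_num : (0:ℝ) ≤ (2215791559404167700937088576582892968750000000000000000000000000/10169025998162460375838355877157492481520636319319549158649418256119)) (pow_nonneg hv.le 8)) (pow_nonneg hw.le 5)
  have h5 : 0 ≤ (2003986860752667714022277068688449709545395507812500000000000000/10169025998162460375838355877157492481520636319319549158649418256119)*(x^2)^9*((24674013/10000000) - x^2)^4 := mul_nonneg (mul_nonneg (by norm_num : (0:ℝ) ≤ (2003986860752667714022277068688449709545395507812500000000000000/10169025998162460375838355877157492481520636319319549158649418256119)) (pow_nonneg hv.le 9)) (pow_nonneg hw.le 4)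
  have h6 : 0 ≤ (3608556881111182247069351865371099900297154326052490234375000000/30507077994487381127515067631472477444561908957958647475948254768357)*(x^2)^10*((24674013/10000000) - x^2)^3 := mul_nonneg (mul_nonneg (by norm_num : (0:ℝ) ≤ (3608556881111182247069351865371099900297154326052490234375000000/30507077994487381127515067631472477444561908957958647475948254768357)) (pow_nonneg hv.le 10)) (pow_nonneg hw.le 3)
  have h7 : 0 ≤ (25855145552009114780058886055217688330547254953144306349560546875/569465455897097781046947929120819578965155633881894752884367422342664)*(x^2)^11*((24674013/10000000) - x^2)^2 := mul_nonneg (mul_nonneg (by norm_num : (0:ℝ) ≤ (25855145552009114780058886055217688330547254953144306349560546875/569465455897097781046947929120819578965155633881894752884367422342664)) (pow_nonneg hv.le 11)) (pow_nonneg hw.le 2)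
  have h8 : 0 ≤ (1472832916409344702800974157823637649153173639314891194681874421875/145783156709657031948018669854929812215079842273765056738398060119721984)*(x^2)^12*((24674013/10000000) - x^2)^1 := mul_nonneg (mul_nonneg (by norm_num : (0:ℝ) ≤ (1472832916409344702800974157823637649153173639314891194681874421875/145783156709657031948018669854929812215079842273765056738398060119721984)) (pow_nonneg hv.le 12)) (pow_nonneg hw.le 1)
  have h9 : 0 ≤ (166558426159163046596019813414280193342650339465634703317560742699366329/167942196529524900804117507672879143671771978299377345362634565257919725568000)*(x^2)^13 := mul_nonneg (by norm_num : (0:ℝ) ≤ (166558426159163046596019813414280193342650339465634703317560742699366329/167942196529524900804117507672879143671771978299377345362634565257919725568000)) (pow_nonneg hv.le 13)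
  linarith [key, h0, h1, h2, h3, h4, h5, h6, h7, h8, h9]

private lemma certB (x : ℝ) (hx : 0 < x) (hu : x ≤ 27/20) :
    0 < x*(x - x^3/6 + x^5/120 - x^7/5040) + (x - x^3/6 + x^5/120 - x^7/5040)^2*(1 - x^2/2 + x^4/24 - x^6/720) - 2*x^2*(1 - x^2/2 + x^4/24 - x^6/720 + x^8/40320) - (16425593/100000000)*x^5*(x - x^3/6 + x^5/120 - x^7/5040 + x^9/362880) := by
  have hv : 0 < x^2 := by positivity
  have hw : (0:ℝ) ≤ 729/400 - x^2 := by nlinarith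
  have key : x*(x - x^3/6 + x^5/120 - x^7/5040) + (x - x^3/6 + x^5/120 - x^7/5040)^2*(1 - x^2/2 + x^4/24 - x^6/720) - 2*x^2*(1 - x^2/2 + x^4/24 - x^6/720 + x^8/40320) - (16425593/100000000)*x^5*(x - x^3/6 + x^5/120 - x^7/5040 + x^9/362880) = 
      (199387758592000000/984770902183611232881)*(x^2)^3*((729/400) - x^2)^7 + (7753527149301760000/6893396315285278630167)*(x^2)^4*((729/400) - x^2)^6 + (862341437661406720/328256967394537077627)*(x^2)^5*((729/400) - x^2)^5 + (16391188816874475376/4923854510918056164405)*(x^2)^6*((729/400) - x^2)^4 + (118526547471519498127241/48253774206996950411169000)*(x^2)^7*((729/400) - x^2)^3 + (16821427632249061828891/16084591402332316803723000)*(x^2)^8*((729/400) - x^2)^2 + (3696611404901179346257/15756334434937779726096000)*(x^2)^9*((729/400) - x^2)^1 + (516600535374091501372103/24705932393982438610518528000)*(x^2)^10 := by ring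
  have h0 : 0 ≤ (199387758592000000/984770902183611232881)*(x^2)^3*((729/400) - x^2)^7 := mul_nonneg (mul_nonneg (by norm_num : (0:ℝ) ≤ (199387758592000000/984770902183611232881)) (pow_nonneg hv.le 3)) (pow_nonneg hw 7)
  have h1 : 0 ≤ (7753527149301760000/6893396315285278630167)*(x^2)^4*((729/400) - x^2)^6 := mul_nonneg (mul_nonneg (by norm_num : (0:ℝ) ≤ (7753527149301760000/6893396315285278630167)) (pow_nonneg hv.le 4)) (pow_nonneg hw 6)
  have h2 : 0 ≤ (862341437661406720/328256967394537077627)*(x^2)^5*((729/400) - x^2)^5 := mul_nonneg (mul_nonneg (by norm_num : (0:ℝ) ≤ (862341437661406720/328256967394537077627)) (pow_nonneg hv.le 5)) (pow_nonneg hw 5)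
  have h3 : 0 ≤ (16391188816874475376/4923854510918056164405)*(x^2)^6*((729/400) - x^2)^4 := mul_nonneg (mul_nonneg (by norm_num : (0:ℝ) ≤ (16391188816874475376/4923854510918056164405)) (pow_nonneg hv.le 6)) (pow_nonneg hw 4)
  have h4 : 0 ≤ (118526547471519498127241/48253774206996950411169000)*(x^2)^7*((729/400) - x^2)^3 := mul_nonneg (mul_nonneg (by norm_num : (0:ℝ) ≤ (118526547471519498127241/48253774206996950411169000)) (pow_nonneg hv.le 7)) (pow_nonneg hw 3)
  have h5 : 0 ≤ (16821427632249061828891/16084591402332316803723000)*(x^2)^8*((729/400) - x^2)^2 := mul_nonneg (mul_nonneg (by norm_num : (0:ℝ) ≤ (16821427632249061828891/16084591402332316803723000)) (pow_nonneg hv.le 8)) (pow_nonneg hw 2)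
  have h6 : 0 ≤ (3696611404901179346257/15756334434937779726096000)*(x^2)^9*((729/400) - x^2)^1 := mul_nonneg (mul_nonneg (by norm_num : (0:ℝ) ≤ (3696611404901179346257/15756334434937779726096000)) (pow_nonneg hv.le 9)) (pow_nonneg hw 1)
  have h7 : 0 < (516600535374091501372103/24705932393982438610518528000)*(x^2)^10 := mul_pos (by norm_num : (0:ℝ) < (516600535374091501372103/24705932393982438610518528000)) (pow_pos hv 10)
  linarith [key, h0, h1, h2, h3, h4, h5, h6, h7]

private lemma certT (t : ℝ) (h0 : 0 ≤ t) (h1 : t ≤ 221/1000) :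
    0 ≤ (5*(3141592/1000000:ℝ)^4 - (3141593/1000000:ℝ)^6/2) + (2*(3141592/1000000:ℝ)^5 - 20*(3141593/1000000:ℝ)^3)*t + (40*(3141592/1000000:ℝ)^2 - 5*(3141593/1000000:ℝ)^4)*t^2 + (10*(3141592/1000000:ℝ)^3 - 40*(3141593/1000000:ℝ))*t^3 + (16 - 20*(3141593/1000000:ℝ)^2)*t^4 + (20*(3141592/1000000:ℝ))*t^5 - 8*t^6 := by
  have hv : 0 ≤ t := h0
  have hw : (0:ℝ) ≤ 221/1000 - t := by linarith
  have key : (5*(3141592/1000000:ℝ)^4 - (3141593/1000000:ℝ)^6/2) + (2*(3141592/1000000:ℝ)^5 - 20*(3141593/1000000:ℝ)^3)*t + (40*(3141592/1000000:ℝ)^2 - 5*(3141593/1000000:ℝ)^4)*t^2 + (10*(3141592/1000000:ℝ)^3 - 40*(3141593/1000000:ℝ))*t^3 + (16 - 20*(3141593/1000000:ℝ)^2)*t^4 + (20*(3141592/1000000:ℝ))*t^5 - 8*t^6 = 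
      (12700270099305304205794727446446709551/233014870574642000000000000000000)*((221/1000) - t)^6 + (36313582010155549184716941768312672653/116507435287321000000000000000000)*(t)^1*((221/1000) - t)^5 + (32723893062954977547138420269203216653/46602974114928400000000000000000)*(t)^2*((221/1000) - t)^4 + (9309618711194188286247688315337253551/11650743528732100000000000000000)*(t)^3*((221/1000) - t)^3 + (22352503642730948579014370902738304653/46602974114928400000000000000000)*(t)^4*((221/1000) - t)^2 + (16278911630230988088664881243382848653/116507435287321000000000000000000)*(t)^5*((221/1000) - t)^1 + (3293243757957308299158729023981797551/233014870574642000000000000000000)*(t)^6 := by ring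
  have h0 : 0 ≤ (12700270099305304205794727446446709551/233014870574642000000000000000000)*((221/1000) - t)^6 := mul_nonneg ((by norm_num : (0:ℝ) ≤ (12700270099305304205794727446446709551/233014870574642000000000000000000))) (pow_nonneg hw 6)
  have h1 : 0 ≤ (36313582010155549184716941768312672653/116507435287321000000000000000000)*(t)^1*((221/1000) - t)^5 := mul_nonneg (mul_nonneg (by norm_num : (0:ℝ) ≤ (36313582010155549184716941768312672653/116507435287321000000000000000000)) (pow_nonneg hv 1)) (pow_nonneg hw 5)
  have h2 : 0 ≤ (32723893062954977547138420269203216653/46602974114928400000000000000000)*(t)^2*((221/1000) - t)^4 := mul_nonneg (mul_nonneg (by norm_num : (0:ℝ) ≤ (32723893062954977547138420269203216653/46602974114928400000000000000000)) (pow_nonneg hv 2)) (pow_nonneg hw 4)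
  have h3 : 0 ≤ (9309618711194188286247688315337253551/11650743528732100000000000000000)*(t)^3*((221/1000) - t)^3 := mul_nonneg (mul_nonneg (by norm_num : (0:ℝ) ≤ (9309618711194188286247688315337253551/11650743528732100000000000000000)) (pow_nonneg hv 3)) (pow_nonneg hw 3)
  have h4 : 0 ≤ (22352503642730948579014370902738304653/46602974114928400000000000000000)*(t)^4*((221/1000) - t)^2 := mul_nonneg (mul_nonneg (by norm_num : (0:ℝ) ≤ (22352503642730948579014370902738304653/46602974114928400000000000000000)) (pow_nonneg hv 4)) (pow_nonneg hw 2)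
  have h5 : 0 ≤ (16278911630230988088664881243382848653/116507435287321000000000000000000)*(t)^5*((221/1000) - t)^1 := mul_nonneg (mul_nonneg (by norm_num : (0:ℝ) ≤ (16278911630230988088664881243382848653/116507435287321000000000000000000)) (pow_nonneg hv 5)) (pow_nonneg hw 1)
  have h6 : 0 ≤ (3293243757957308299158729023981797551/233014870574642000000000000000000)*(t)^6 := mul_nonneg (by norm_num : (0:ℝ) ≤ (3293243757957308299158729023981797551/233014870574642000000000000000000)) (pow_nonneg hv 6)
  linarith [key, h0, h1, h2, h3, h4, h5, h6]

private lemma cos_sq_lb {t : ℝ} (h : 1 - t^2/2 ≤ cos t) (h2 : 0 ≤ cos t) :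
    1 - t^2 ≤ cos t^2 := by nlinarith [sq_nonneg (t^2)]

private lemma sq_small {t : ℝ} (h0 : 0 ≤ t) (h1 : t ≤ 221/1000) : t^2 ≤ 5/100 := by nlinarith

set_option maxHeartbeats 1000000 in
private lemma keyA (x : ℝ) (h1 : 0 < x) (h2 : x < π/2) :
    sin x^2*cos x + x*sin x < 2*x^2*cos x + 8/45*x^5*sin x := by
  have hpb := Real.pi_lt_d20
  have hq : 0 < (π/2 - x)*(π/2 + x) := mul_pos (by linarith) (by linarith)
  have hpi2 : π^2 < 98696045/10000000 := by nlinarith [Real.pi_gt_three]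
  have hx2 : x^2 < 24674013/10000000 := by nlinarith [hq, hpi2]
  have hs0 : 0 ≤ sin x := Real.sin_nonneg_of_nonneg_of_le_pi h1.le (by linarith [Real.pi_gt_three])
  have hc0 : 0 ≤ cos x := Real.cos_nonneg_of_mem_Icc ⟨by linarith [Real.pi_gt_three], h2.le⟩
  have hsl := sin_lb7 h1.le
  have hsh := sin_ub9 h1.le
  have hcl := cos_lb6 h1.le
  have hch := cos_ub8 h1.le
  have hchnn : 0 ≤ (1 - x^2/2 + x^4/24 - x^6/720 + x^8/40320) := by linarith
  have e1 : sin x^2 ≤ (x - x^3/6 + x^5/120 - x^7/5040 + x^9/362880)^2 :=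
    pow_le_pow_left₀ hs0 hsh 2
  have e2 : sin x^2*cos x ≤ (x - x^3/6 + x^5/120 - x^7/5040 + x^9/362880)^2*(1 - x^2/2 + x^4/24 - x^6/720 + x^8/40320) :=
    mul_le_mul e1 hch hc0 (by positivity)
  have e3 : x*sin x ≤ x*(x - x^3/6 + x^5/120 - x^7/5040 + x^9/362880) :=
    mul_le_mul_of_nonneg_left hsh h1.le
  have e4 : 2*x^2*(1 - x^2/2 + x^4/24 - x^6/720) ≤ 2*x^2*cos x :=
    mul_le_mul_of_nonneg_left hcl (by positivity)
  have e5 : 8/45*x^5*(x - x^3/6 + x^5/120 - x^7/5040) ≤ 8/45*x^5*sin x :=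
    mul_le_mul_of_nonneg_left hsl (by positivity)
  have hcert := certA x h1 hx2
  linarith only [hcert, e2, e3, e4, e5]

set_option maxHeartbeats 1000000 in
private lemma keyBmid (x : ℝ) (h1 : 0 < x) (hu : x ≤ 27/20) :
    2*x^2*cos x*π^4 + 16*x^5*sin x < (sin x^2*cos x + x*sin x)*π^4 := by
  have hx2 : x^2 ≤ 729/400 := by nlinarith
  have hs0 : 0 ≤ sin x := Real.sin_nonneg_of_nonneg_of_le_pi h1.le (by linarith [Real.pi_gt_three])
  have hc0 : 0 ≤ cos x := Real.cos_nonneg_of_mem_Icc ⟨by linarith [Real.pi_gt_three], by linarith [Real.pi_gt_three]⟩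
  have hsl := sin_lb7 h1.le
  have hsh := sin_ub9 h1.le
  have hcl := cos_lb6 h1.le
  have hch := cos_ub8 h1.le
  have hSLOnn : 0 ≤ (x - x^3/6 + x^5/120 - x^7/5040) := by nlinarith [hx2, h1.le, sq_nonneg x, pow_nonneg h1.le 3, pow_nonneg h1.le 5, pow_nonneg h1.le 7]
  have hCLOnn : 0 ≤ (1 - x^2/2 + x^4/24 - x^6/720) := by nlinarith [hx2, sq_nonneg x, sq_nonneg (x^2), pow_nonneg (sq_nonneg x) 3]
  have hSHInn : 0 ≤ (x - x^3/6 + x^5/120 - x^7/5040 + x^9/362880) := by nlinarith [hSLOnn, pow_nonneg h1.le 9]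
  have e1 : (x - x^3/6 + x^5/120 - x^7/5040)^2 ≤ sin x^2 :=
    pow_le_pow_left₀ hSLOnn hsl 2
  have e2 : (x - x^3/6 + x^5/120 - x^7/5040)^2*(1 - x^2/2 + x^4/24 - x^6/720) ≤ sin x^2*cos x :=
    mul_le_mul e1 hcl hCLOnn (by positivity)
  have e3 : x*(x - x^3/6 + x^5/120 - x^7/5040) ≤ x*sin x :=
    mul_le_mul_of_nonneg_left hsl h1.le
  have e4 : 2*x^2*cos x ≤ 2*x^2*(1 - x^2/2 + x^4/24 - x^6/720 + x^8/40320) :=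
    mul_le_mul_of_nonneg_left hch (by positivity)
  have e5 : 16*x^5*sin x ≤ 16*x^5*(x - x^3/6 + x^5/120 - x^7/5040 + x^9/362880) :=
    mul_le_mul_of_nonneg_left hsh (by positivity)
  have hcert := certB x h1 hu
  have hGpos : 0 < sin x^2*cos x + x*sin x - 2*x^2*cos x
      - (16425593/100000000)*x^5*(x - x^3/6 + x^5/120 - x^7/5040 + x^9/362880) := by
    linarith only [hcert, e2, e3, e4]
  have q2a : (3141592/1000000:ℝ)^2 < π^2 := by nlinarith [Real.pi_gt_d6, Real.pi_gt_three]
  have hπ4 : (3141592/1000000:ℝ)^4 ≤ π^4 := by nlinarith [q2a, Real.pi_gt_three]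
  have m0 : 0 < (3141592/1000000:ℝ)^4 *
      (sin x^2*cos x + x*sin x - 2*x^2*cos x
        - (16425593/100000000)*x^5*(x - x^3/6 + x^5/120 - x^7/5040 + x^9/362880)) :=
    mul_pos (by norm_num) hGpos
  have m1 : (3141592/1000000:ℝ)^4 *
      (sin x^2*cos x + x*sin x - 2*x^2*cos x
        - (16425593/100000000)*x^5*(x - x^3/6 + x^5/120 - x^7/5040 + x^9/362880))
      ≤ π^4 *
      (sin x^2*cos x + x*sin x - 2*x^2*cos x
        - (16425593/100000000)*x^5*(x - x^3/6 + x^5/120 - x^7/5040 + x^9/362880)) :=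
    mul_le_mul_of_nonneg_right hπ4 hGpos.le
  have hXnn : 0 ≤ x^5*(x - x^3/6 + x^5/120 - x^7/5040 + x^9/362880) :=
    mul_nonneg (by positivity) hSHInn
  have m3 : 16*(x^5*(x - x^3/6 + x^5/120 - x^7/5040 + x^9/362880)) ≤
      ((3141592/1000000:ℝ)^4*(16425593/100000000))*(x^5*(x - x^3/6 + x^5/120 - x^7/5040 + x^9/362880)) :=
    mul_le_mul_of_nonneg_right (by norm_num) hXnn
  have m4 : (3141592/1000000:ℝ)^4*((16425593/100000000)*(x^5*(x - x^3/6 + x^5/120 - x^7/5040 + x^9/362880)))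
      ≤ π^4*((16425593/100000000)*(x^5*(x - x^3/6 + x^5/120 - x^7/5040 + x^9/362880))) :=
    mul_le_mul_of_nonneg_right hπ4 (mul_nonneg (by norm_num) hXnn)
  linarith only [m0, m1, m3, m4, e5]

set_option maxHeartbeats 1000000 in
private lemma keyBtop (x : ℝ) (hl : 27/20 ≤ x) (h2 : x < π/2) :
    2*x^2*cos x*π^4 + 16*x^5*sin x < (sin x^2*cos x + x*sin x)*π^4 := by
  have hpa := Real.pi_gt_d6
  have hpb := Real.pi_lt_d6
  obtain ⟨t, ht⟩ : ∃ t : ℝ, t = π/2 - x := ⟨_, rfl⟩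
  have ht0 : 0 < t := by rw [ht]; linarith
  have htu : t ≤ 221/1000 := by rw [ht]; linarith
  have hs1 : cos t = sin x := by rw [ht]; exact Real.cos_pi_div_two_sub x
  have hs2 : sin t = cos x := by rw [ht]; exact Real.sin_pi_div_two_sub x
  have hx_eq : x = π/2 - t := by rw [ht]; ring
  rw [← hs1, ← hs2, hx_eq]
  have hπ3 := Real.pi_gt_three
  have q2a : (3141592/1000000:ℝ)^2 < π^2 := by nlinarith [hpa, hπ3]
  have q2b : π^2 < (3141593/1000000:ℝ)^2 := by nlinarith [hpb, hπ3]
  have q3a : (3141592/1000000:ℝ)^3 < π^3 := by nlinarith [q2a, hpa, hπ3]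
  have q3b : π^3 < (3141593/1000000:ℝ)^3 := by nlinarith [q2b, hpb, hπ3]
  have q4a : (3141592/1000000:ℝ)^4 < π^4 := by nlinarith [q2a, hπ3]
  have q4b : π^4 < (3141593/1000000:ℝ)^4 := by nlinarith [q2b, hπ3]
  have q5a : (3141592/1000000:ℝ)^5 < π^5 := by nlinarith [q4a, hpa, hπ3, q2a]
  have q6b : π^6 < (3141593/1000000:ℝ)^6 := by nlinarith [q2b, q4b, hπ3]
  have hT := certT t ht0.le htu
  have d1 : 0 ≤ (2*π^5 - 20*π^3 - (2*(3141592/1000000:ℝ)^5 - 20*(3141593/1000000:ℝ)^3))*t :=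
    mul_nonneg (by linarith only [q5a, q3b]) ht0.le
  have d2 : 0 ≤ (40*π^2 - 5*π^4 - (40*(3141592/1000000:ℝ)^2 - 5*(3141593/1000000:ℝ)^4))*t^2 :=
    mul_nonneg (by linarith only [q2a, q4b]) (by positivity)
  have d3 : 0 ≤ (10*π^3 - 40*π - (10*(3141592/1000000:ℝ)^3 - 40*(3141593/1000000:ℝ)))*t^3 :=
    mul_nonneg (by linarith only [q3a, hpb]) (by positivity)
  have d4 : 0 ≤ (16 - 20*π^2 - (16 - 20*(3141593/1000000:ℝ)^2))*t^4 :=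
    mul_nonneg (by linarith only [q2b]) (by positivity)
  have d5 : 0 ≤ (20*π - 20*(3141592/1000000:ℝ))*t^5 :=
    mul_nonneg (by linarith only [hpa]) (by positivity)
  have hΔ : 0 ≤ 2*(π/2-t)*(1-t^2/2)*(2*π-2*t)*(2*π^2-4*π*t+4*t^2) - π^4*(2*(π/2-t)^2-1+t^2) := by
    linarith only [hT, d1, d2, d3, d4, d5, q4a, q6b]
  have hst : sin t < t := Real.sin_lt ht0
  have hct : 1 - t^2/2 ≤ cos t := Real.one_sub_sq_div_two_le_cos
  have ht2 : t^2 ≤ 5/100 := sq_small ht0.le htu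
  have hctp : 0 < cos t := by linarith only [hct, ht2]
  have hstp : 0 < sin t := Real.sin_pos_of_pos_of_lt_pi ht0 (by linarith only [htu, hπ3])
  have hc2 : 1 - t^2 ≤ cos t^2 := cos_sq_lb hct hctp.le
  have hX : (1349:ℝ)/1000 ≤ π/2 - t := by linarith
  have hXp : (0:ℝ) < π/2 - t := by linarith
  have hpow : (π - 2*t)^4 ≤ π^4 :=
    pow_le_pow_left₀ (by linarith only [hl, hx_eq]) (by linarith only [ht0]) 4
  have h16 : 0 ≤ π^4 - 16*(π/2-t)^4 := by linarith only [hpow]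
  have F4 : 0 ≤ (cos t - (1 - t^2/2)) * ((π/2-t)*(π^4-16*(π/2-t)^4)) :=
    mul_nonneg (by linarith) (mul_nonneg hXp.le h16)
  have tD : 0 ≤ t * (2*(π/2-t)*(1-t^2/2)*(2*π-2*t)*(2*π^2-4*π*t+4*t^2) - π^4*(2*(π/2-t)^2-1+t^2)) :=
    mul_nonneg ht0.le hΔ
  have hXsq : ((1349:ℝ)/1000)^2 ≤ (π/2-t)^2 := pow_le_pow_left₀ (by norm_num) hX 2
  have hbr : 0 < 2*(π/2-t)^2 - 1 + t^2 := by nlinarith [hXsq, sq_nonneg t]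
  have Fst : 0 < (t - sin t) * (π^4*(2*(π/2-t)^2-1+t^2)) :=
    mul_pos (by linarith) (mul_pos (by positivity) hbr)
  have F1 : 0 ≤ (π^4*sin t) * (cos t^2 - 1 + t^2) :=
    mul_nonneg (mul_nonneg (by positivity) hstp.le) (by linarith)
  linarith only [F4, tD, Fst, F1]

private lemma keyB (x : ℝ) (h1 : 0 < x) (h2 : x < π/2) :
    2*x^2*cos x*π^4 + 16*x^5*sin x < (sin x^2*cos x + x*sin x)*π^4 := by
  rcases le_or_gt x (27/20) with hx | hx
  · exact keyBmid x h1 hx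
  · exact keyBtop x hx.le h2

theorem stmt_1 (x : ℝ) (h1 : 0 < x) (h2 : x < π / 2) :
    2 + (2 / π) ^ 4 * x ^ 3 * tan x < (sin x / x) ^ 2 + tan x / x ∧
      (sin x / x) ^ 2 + tan x / x < 2 + (8 / 45) * x ^ 3 * tan x := by
  have hπ3 := Real.pi_gt_three
  have hc : 0 < cos x := Real.cos_pos_of_mem_Ioo ⟨by linarith, h2⟩
  have hs : 0 < sin x := Real.sin_pos_of_pos_of_lt_pi h1 (by linarith)
  have hne1 : x ≠ 0 := ne_of_gt h1
  have hne2 : cos x ≠ 0 := ne_of_gt hc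
  have hneπ : π ≠ 0 := by positivity
  constructor
  · have key := keyB x h1 h2
    have heq : (sin x / x) ^ 2 + tan x / x - (2 + (2/π)^4*x^3*tan x)
        = ((sin x^2*cos x + x*sin x)*π^4 - (2*x^2*cos x*π^4 + 16*x^5*sin x)) / (x^2*cos x*π^4) := by
      rw [Real.tan_eq_sin_div_cos]; field_simp; ring
    have hpos : 0 < ((sin x^2*cos x + x*sin x)*π^4 - (2*x^2*cos x*π^4 + 16*x^5*sin x)) / (x^2*cos x*π^4) :=
      div_pos (by linarith) (by positivity)
    linarith [heq, hpos]
  · have key := keyA x h1 h2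
    have heq : (2 + 8/45*x^3*tan x) - ((sin x / x) ^ 2 + tan x / x)
        = (2*x^2*cos x + 8/45*x^5*sin x - (sin x^2*cos x + x*sin x)) / (x^2*cos x) := by
      rw [Real.tan_eq_sin_div_cos]; field_simp
    have hpos : 0 < (2*x^2*cos x + 8/45*x^5*sin x - (sin x^2*cos x + x*sin x)) / (x^2*cos x) :=
      div_pos (by linarith) (by positivity)
    linarith [heq, hpos]
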